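/- Let K be a field of characteristic zero, let 0 ≤ i₁ < i₂ < i₃ < i₄ be natural numbers, J = {i₁,i₂,i₃,i₄}, and let β ∈ K be a root of unity. Regard D_J as a polynomial in K[x]. If β^{i₁} = β^{i₂} = β^{i₃} = β^{i₄}, then β is a root of D_J of multiplicity exactly 4. If exactly three of the four powers β^{i₁}, β^{i₂}, β^{i₃}, β^{i₄} are equal to a common value and the remaining one is different, then β is a root of D_J of multiplicity exactly 1. -/

import Mathlib

open Polynomial

/-- The 4×4 matrix `𝐌_J(x)` for `J = {a,b,c,d}` (columns in the given order),
whose column for exponent `i` is `(1, i, x^i, i·x^i)ᵀ`, and its determinant `D_J`. -/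
noncomputable def Dfour (a b c d : ℕ) : Polynomial ℤ :=
  (Matrix.of fun r (j : Fin 4) =>
    ![(1 : Polynomial ℤ), ((![a,b,c,d] j : ℕ) : Polynomial ℤ),
      X ^ (![a,b,c,d] j), ((![a,b,c,d] j : ℕ) : Polynomial ℤ) * X ^ (![a,b,c,d] j)] r).det

lemma Dfour.det_fin_four' {R : Type*} [CommRing R] (A : Matrix (Fin 4) (Fin 4) R) :
    A.det =
      A 0 0 * (A 1 1 * (A 2 2 * A 3 3 - A 2 3 * A 3 2) - A 1 2 * (A 2 1 * A 3 3 - A 2 3 * A 3 1)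
        + A 1 3 * (A 2 1 * A 3 2 - A 2 2 * A 3 1))
      - A 0 1 * (A 1 0 * (A 2 2 * A 3 3 - A 2 3 * A 3 2) - A 1 2 * (A 2 0 * A 3 3 - A 2 3 * A 3 0)
        + A 1 3 * (A 2 0 * A 3 2 - A 2 2 * A 3 0))
      + A 0 2 * (A 1 0 * (A 2 1 * A 3 3 - A 2 3 * A 3 1) - A 1 1 * (A 2 0 * A 3 3 - A 2 3 * A 3 0)
        + A 1 3 * (A 2 0 * A 3 1 - A 2 1 * A 3 0))
      - A 0 3 * (A 1 0 * (A 2 1 * A 3 2 - A 2 2 * A 3 1) - A 1 1 * (A 2 0 * A 3 2 - A 2 2 * A 3 0)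
        + A 1 2 * (A 2 0 * A 3 1 - A 2 1 * A 3 0)) := by
  rw [Matrix.det_succ_row_zero]
  simp [Fin.sum_univ_succ, Matrix.det_fin_three, Fin.succAbove, Matrix.submatrix_apply]
  ring

/-- `X^4` times the image of `Dfour` in `K[X]`, written explicitly. -/
noncomputable def Dfour.qpoly (K : Type*) [Field K] (a b c d : ℕ) : K[X] :=
  C (((b:K)-a)*((d:K)-c)) * (X^(a+b+4)+X^(c+d+4))
  - C (((c:K)-a)*((d:K)-b)) * (X^(a+c+4)+X^(b+d+4))
  + C (((d:K)-a)*((c:K)-b)) * (X^(a+d+4)+X^(b+c+4))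

lemma Dfour.map_mul_X_pow (K : Type*) [Field K] (a b c d : ℕ) :
    (Dfour a b c d).map (Int.castRingHom K) * X^4 = Dfour.qpoly K a b c d := by
  unfold Dfour Dfour.qpoly
  rw [Dfour.det_fin_four']
  simp only [Matrix.of_apply, Matrix.cons_val', Matrix.cons_val_zero, Matrix.cons_val_one,
    Matrix.head_cons, Matrix.empty_val', Matrix.cons_val_fin_one,
    Matrix.cons_val_two, Matrix.cons_val_three, Matrix.tail_cons]
  simp only [Polynomial.map_add, Polynomial.map_sub, Polynomial.map_mul, Polynomial.map_pow,
    Polynomial.map_X, Polynomial.map_natCast, Polynomial.map_one, map_sub, map_mul,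
    Polynomial.C_eq_natCast]
  ring

lemma Dfour.mult_transfer (K : Type*) [Field K] (a b c d : ℕ) (β : K) (hβ : β ≠ 0)
    (hq : Dfour.qpoly K a b c d ≠ 0) :
    ((Dfour a b c d).map (Int.castRingHom K)).rootMultiplicity β
      = (Dfour.qpoly K a b c d).rootMultiplicity β := by
  have hp : (Dfour a b c d).map (Int.castRingHom K) ≠ 0 := by
    intro h
    apply hq
    rw [← Dfour.map_mul_X_pow, h, zero_mul]
  have hx : ((X:K[X])^4).rootMultiplicity β = 0 := by
    apply Polynomial.rootMultiplicity_eq_zero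
    simp [Polynomial.IsRoot, pow_ne_zero _ hβ]
  rw [← Dfour.map_mul_X_pow]
  rw [Polynomial.rootMultiplicity_mul (by rw [Dfour.map_mul_X_pow]; exact hq), hx, add_zero]

/-- for a field `K` of characteristic zero, `i₁ < i₂ < i₃ < i₄`,
and a root of unity `β ∈ K`: if all four powers `β^{i_j}` are equal then `β` is a root
of `D_J` (viewed in `K[x]`) of multiplicity exactly 4; if exactly three of the powers
are equal and the remaining one is different, then the multiplicity is exactly 1. -/
theorem Dfour_rootMultiplicity (K : Type*) [Field K] [CharZero K]
    (i₁ i₂ i₃ i₄ : ℕ) (h₁₂ : i₁ < i₂) (h₂₃ : i₂ < i₃) (h₃₄ : i₃ < i₄)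
    (β : K) (hβ : ∃ m : ℕ, 0 < m ∧ β ^ m = 1) :
    ((β ^ i₁ = β ^ i₂ ∧ β ^ i₂ = β ^ i₃ ∧ β ^ i₃ = β ^ i₄) →
      ((Dfour i₁ i₂ i₃ i₄).map (Int.castRingHom K)).rootMultiplicity β = 4) ∧
    (((β ^ i₁ = β ^ i₂ ∧ β ^ i₁ = β ^ i₃ ∧ β ^ i₁ ≠ β ^ i₄) ∨
      (β ^ i₁ = β ^ i₂ ∧ β ^ i₁ = β ^ i₄ ∧ β ^ i₁ ≠ β ^ i₃) ∨
      (β ^ i₁ = β ^ i₃ ∧ β ^ i₁ = β ^ i₄ ∧ β ^ i₁ ≠ β ^ i₂) ∨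
      (β ^ i₂ = β ^ i₃ ∧ β ^ i₂ = β ^ i₄ ∧ β ^ i₂ ≠ β ^ i₁)) →
      ((Dfour i₁ i₂ i₃ i₄).map (Int.castRingHom K)).rootMultiplicity β = 1) := by
  obtain ⟨m, hm, hβm⟩ := hβ
  have hβ0 : β ≠ 0 := by
    intro h
    rw [h, zero_pow hm.ne'] at hβm
    exact zero_ne_one hβm
  -- nonzero cast differences
  have hc : ∀ {u v : ℕ}, u < v → ((v:K) - u) ≠ 0 := fun {u v} huv =>
    sub_ne_zero.mpr (fun h => huv.ne' (Nat.cast_injective h))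
  have h₁₃ := h₁₂.trans h₂₃
  have h₂₄ := h₂₃.trans h₃₄
  have h₁₄ := h₁₃.trans h₃₄
  set q := Dfour.qpoly K i₁ i₂ i₃ i₄ with hqdef
  constructor
  · rintro ⟨h1, h2, h3⟩
    have e4 : eval β (derivative^[4] q) =
        β ^ i₁ * β ^ i₁ *
          (2*(((i₂:K)-i₁)*((i₃:K)-i₁)*((i₄:K)-i₁)*((i₃:K)-i₂)*((i₄:K)-i₂)*((i₄:K)-i₃))) := by
      rw [hqdef]; unfold Dfour.qpoly
      simp only [Function.iterate_succ_apply', Function.iterate_zero_apply,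
        derivative_add, derivative_sub, derivative_C_mul, derivative_X_pow,
        show ∀ n:ℕ, n+4-1 = n+3 from fun _ => rfl,
        show ∀ n:ℕ, n+3-1 = n+2 from fun _ => rfl,
        show ∀ n:ℕ, n+2-1 = n+1 from fun _ => rfl,
        show ∀ n:ℕ, n+1-1 = n from fun _ => rfl]
      simp only [eval_add, eval_sub, eval_mul, eval_C, eval_pow, eval_X, eval_natCast, pow_add]
      rw [show β ^ i₂ = β ^ i₁ from h1.symm, show β ^ i₃ = β ^ i₁ from (h1.trans h2).symm,
        show β ^ i₄ = β ^ i₁ from ((h1.trans h2).trans h3).symm]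
      push_cast
      ring
    have e4ne : eval β (derivative^[4] q) ≠ 0 := by
      rw [e4]
      exact mul_ne_zero (mul_ne_zero (pow_ne_zero _ hβ0) (pow_ne_zero _ hβ0))
        (mul_ne_zero two_ne_zero (mul_ne_zero (mul_ne_zero (mul_ne_zero (mul_ne_zero
          (mul_ne_zero (hc h₁₂) (hc h₁₃)) (hc h₁₄)) (hc h₂₃)) (hc h₂₄)) (hc h₃₄)))
    have hqne : q ≠ 0 := by
      intro h
      rw [h] at e4ne
      simp at e4ne
    have hroot : ∀ n ≤ 3, (derivative^[n] q).IsRoot β := by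
      intro n hn
      interval_cases n <;>
      · rw [hqdef]; unfold Dfour.qpoly
        simp only [Function.iterate_succ_apply', Function.iterate_zero_apply,
          derivative_add, derivative_sub, derivative_C_mul, derivative_X_pow,
          show ∀ n:ℕ, n+4-1 = n+3 from fun _ => rfl,
          show ∀ n:ℕ, n+3-1 = n+2 from fun _ => rfl,
          show ∀ n:ℕ, n+2-1 = n+1 from fun _ => rfl]
        simp only [IsRoot, eval_add, eval_sub, eval_mul, eval_C, eval_pow, eval_X, eval_natCast,
          pow_add]
        rw [show β ^ i₂ = β ^ i₁ from h1.symm, show β ^ i₃ = β ^ i₁ from (h1.trans h2).symm,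
          show β ^ i₄ = β ^ i₁ from ((h1.trans h2).trans h3).symm]
        push_cast
        ring
    have hle : q.rootMultiplicity β ≤ 4 := by
      by_contra h
      exact e4ne (Polynomial.isRoot_iterate_derivative_of_lt_rootMultiplicity (by omega))
    have hge : 3 < q.rootMultiplicity β :=
      Polynomial.lt_rootMultiplicity_of_isRoot_iterate_derivative hqne hroot
    rw [Dfour.mult_transfer K i₁ i₂ i₃ i₄ β hβ0 hqne, ← hqdef]
    omega
  · intro hcase
    -- derivative value nonzero, eval zero, in each of the four subcases
    have key : eval β q = 0 ∧ eval β (derivative q) ≠ 0 := by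
      obtain ⟨h1, h2, h3⟩ | ⟨h1, h2, h3⟩ | ⟨h1, h2, h3⟩ | ⟨h1, h2, h3⟩ := hcase
      · refine ⟨?_, ?_⟩
        · rw [hqdef]; unfold Dfour.qpoly
          simp only [eval_add, eval_sub, eval_mul, eval_C, eval_pow, eval_X, pow_add]
          rw [show β ^ i₂ = β ^ i₁ from h1.symm, show β ^ i₃ = β ^ i₁ from h2.symm]
          ring
        · have : eval β (derivative q) = β^3 * β ^ i₁ * (β ^ i₁ - β ^ i₄) *
              (((i₂:K)-i₁)*((i₃:K)-i₁)*((i₃:K)-i₂)) := by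
            rw [hqdef]; unfold Dfour.qpoly
            simp only [derivative_add, derivative_sub, derivative_C_mul, derivative_X_pow,
              show ∀ n:ℕ, n+4-1 = n+3 from fun _ => rfl]
            simp only [eval_add, eval_sub, eval_mul, eval_C, eval_pow, eval_X, eval_natCast,
              pow_add]
            rw [show β ^ i₂ = β ^ i₁ from h1.symm, show β ^ i₃ = β ^ i₁ from h2.symm]
            push_cast
            ring
          rw [this]
          exact mul_ne_zero (mul_ne_zero (mul_ne_zero (pow_ne_zero _ hβ0) (pow_ne_zero _ hβ0))
            (sub_ne_zero.mpr h3))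
            (mul_ne_zero (mul_ne_zero (hc h₁₂) (hc h₁₃)) (hc h₂₃))
      · refine ⟨?_, ?_⟩
        · rw [hqdef]; unfold Dfour.qpoly
          simp only [eval_add, eval_sub, eval_mul, eval_C, eval_pow, eval_X, pow_add]
          rw [show β ^ i₂ = β ^ i₁ from h1.symm, show β ^ i₄ = β ^ i₁ from h2.symm]
          ring
        · have : eval β (derivative q) = β^3 * β ^ i₁ * (β ^ i₃ - β ^ i₁) *
              (((i₂:K)-i₁)*((i₄:K)-i₁)*((i₄:K)-i₂)) := by
            rw [hqdef]; unfold Dfour.qpoly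
            simp only [derivative_add, derivative_sub, derivative_C_mul, derivative_X_pow,
              show ∀ n:ℕ, n+4-1 = n+3 from fun _ => rfl]
            simp only [eval_add, eval_sub, eval_mul, eval_C, eval_pow, eval_X, eval_natCast,
              pow_add]
            rw [show β ^ i₂ = β ^ i₁ from h1.symm, show β ^ i₄ = β ^ i₁ from h2.symm]
            push_cast
            ring
          rw [this]
          exact mul_ne_zero (mul_ne_zero (mul_ne_zero (pow_ne_zero _ hβ0) (pow_ne_zero _ hβ0))
            (sub_ne_zero.mpr (Ne.symm h3)))
            (mul_ne_zero (mul_ne_zero (hc h₁₂) (hc h₁₄)) (hc h₂₄))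
      · refine ⟨?_, ?_⟩
        · rw [hqdef]; unfold Dfour.qpoly
          simp only [eval_add, eval_sub, eval_mul, eval_C, eval_pow, eval_X, pow_add]
          rw [show β ^ i₃ = β ^ i₁ from h1.symm, show β ^ i₄ = β ^ i₁ from h2.symm]
          ring
        · have : eval β (derivative q) = β^3 * β ^ i₁ * (β ^ i₁ - β ^ i₂) *
              (((i₃:K)-i₁)*((i₄:K)-i₁)*((i₄:K)-i₃)) := by
            rw [hqdef]; unfold Dfour.qpoly
            simp only [derivative_add, derivative_sub, derivative_C_mul, derivative_X_pow,
              show ∀ n:ℕ, n+4-1 = n+3 from fun _ => rfl]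
            simp only [eval_add, eval_sub, eval_mul, eval_C, eval_pow, eval_X, eval_natCast,
              pow_add]
            rw [show β ^ i₃ = β ^ i₁ from h1.symm, show β ^ i₄ = β ^ i₁ from h2.symm]
            push_cast
            ring
          rw [this]
          exact mul_ne_zero (mul_ne_zero (mul_ne_zero (pow_ne_zero _ hβ0) (pow_ne_zero _ hβ0))
            (sub_ne_zero.mpr h3))
            (mul_ne_zero (mul_ne_zero (hc h₁₃) (hc h₁₄)) (hc h₃₄))
      · refine ⟨?_, ?_⟩
        · rw [hqdef]; unfold Dfour.qpoly
          simp only [eval_add, eval_sub, eval_mul, eval_C, eval_pow, eval_X, pow_add]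
          rw [show β ^ i₃ = β ^ i₂ from h1.symm, show β ^ i₄ = β ^ i₂ from h2.symm]
          ring
        · have : eval β (derivative q) = β^3 * β ^ i₂ * (β ^ i₁ - β ^ i₂) *
              (((i₃:K)-i₂)*((i₄:K)-i₂)*((i₄:K)-i₃)) := by
            rw [hqdef]; unfold Dfour.qpoly
            simp only [derivative_add, derivative_sub, derivative_C_mul, derivative_X_pow,
              show ∀ n:ℕ, n+4-1 = n+3 from fun _ => rfl]
            simp only [eval_add, eval_sub, eval_mul, eval_C, eval_pow, eval_X, eval_natCast,
              pow_add]
            rw [show β ^ i₃ = β ^ i₂ from h1.symm, show β ^ i₄ = β ^ i₂ from h2.symm]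
            push_cast
            ring
          rw [this]
          exact mul_ne_zero (mul_ne_zero (mul_ne_zero (pow_ne_zero _ hβ0) (pow_ne_zero _ hβ0))
            (sub_ne_zero.mpr (Ne.symm h3)))
            (mul_ne_zero (mul_ne_zero (hc h₂₃) (hc h₂₄)) (hc h₃₄))
    obtain ⟨e0, e1⟩ := key
    have hqne : q ≠ 0 := by
      intro h
      rw [h] at e1
      simp at e1
    have hle : q.rootMultiplicity β ≤ 1 := by
      by_contra h
      have := Polynomial.isRoot_iterate_derivative_of_lt_rootMultiplicity
        (show 1 < q.rootMultiplicity β by omega)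
      rw [Function.iterate_one] at this
      exact e1 this
    have hge : 0 < q.rootMultiplicity β :=
      (Polynomial.rootMultiplicity_pos hqne).mpr e0
    rw [Dfour.mult_transfer K i₁ i₂ i₃ i₄ β hβ0 hqne, ← hqdef]
    omega
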